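/- arXiv:2402.09238 — 5 statements merged into one kernel-verified Lean document; each statement's English description precedes it below -/
import Mathlib

section
/- Let X be a Banach sequence space contained in ω = ℂ^ℕ whose norm is an absolute Riesz norm and which is solid. If the classical Cesàro operator C_1 given by (C_1 x)_n = (x_0 + ⋯ + x_n)/(n+1) is a bounded operator on X, then for every t ∈ [0,1) the generalized Cesàro operator C_t, given by (C_t x)_n = (t^n x_0 + t^{n-1} x_1 + ⋯ + x_n)/(n+1), is also bounded on X with ‖C_t‖ ≤ ‖C_1‖. -/
/-- The generalized Cesàro operator on ω = ℂ^ℕ₀: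
`(Ces t x) n = (Σ_{i=0}^n t^{n-i} x_i) / (n+1)`. -/
noncomputable def Ces (t : ℝ) (x : ℕ → ℂ) : ℕ → ℂ :=
  fun n => (∑ i ∈ Finset.range (n + 1), (t : ℂ) ^ (n - i) * x i) / ((n : ℂ) + 1)

lemma Ces_abs_le {t : ℝ} (ht0 : 0 ≤ t) (ht1 : t ≤ 1) (f : ℕ → ℂ) (n : ℕ) :
    ‖Ces t f n‖ ≤
      (∑ i ∈ Finset.range (n + 1), ‖f i‖) / ((n : ℝ) + 1) := by
  unfold Ces
  rw [norm_div, show ((n : ℂ) + 1) = (((n : ℝ) + 1 : ℝ) : ℂ) by push_cast; ring,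
    Complex.norm_real, Real.norm_eq_abs, abs_of_pos (by positivity : (0:ℝ) < (n:ℝ) + 1)]
  gcongr
  calc ‖∑ i ∈ Finset.range (n + 1), (t : ℂ) ^ (n - i) * f i‖
      ≤ ∑ i ∈ Finset.range (n + 1), ‖(t : ℂ) ^ (n - i) * f i‖ :=
        norm_sum_le _ _
    _ ≤ ∑ i ∈ Finset.range (n + 1), ‖f i‖ := by
        apply Finset.sum_le_sum
        intro i _
        rw [norm_mul, norm_pow, Complex.norm_real, Real.norm_eq_abs, abs_of_nonneg ht0]
        calc t ^ (n - i) * ‖f i‖ ≤ 1 * ‖f i‖ := by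
              apply mul_le_mul_of_nonneg_right (pow_le_one₀ ht0 ht1) (by positivity)
          _ = ‖f i‖ := one_mul _

lemma Ces_one_abs (g : ℕ → ℂ) (g' : ℕ → ℂ) (hg : ∀ n, g' n = ((‖g n‖ : ℝ) : ℂ))
    (n : ℕ) : ‖Ces 1 g' n‖ =
      (∑ i ∈ Finset.range (n + 1), ‖g i‖) / ((n : ℝ) + 1) := by
  unfold Ces
  simp only [hg, Complex.ofReal_one, one_pow, one_mul]
  rw [show ((n : ℂ) + 1) = (((n : ℝ) + 1 : ℝ) : ℂ) by push_cast; ring,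
    ← Complex.ofReal_sum, ← Complex.ofReal_div, Complex.norm_real, Real.norm_eq_abs,
    abs_of_nonneg]
  apply div_nonneg (Finset.sum_nonneg fun i _ => norm_nonneg _) (by positivity)

/-- Let X ⊆ ω be a Banach sequence space (realized by an injective linear
embedding e : X → ω) which is solid and whose norm is an absolute Riesz norm.  If the
classical Cesàro operator C₁ is bounded on X, then for every t ∈ [0,1) the generalized
Cesàro operator C_t is bounded on X with ‖C_t‖ ≤ ‖C₁‖. -/
theorem stmt_5 {X : Type*} [NormedAddCommGroup X] [NormedSpace ℂ X] [CompleteSpace X]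
    (e : X →ₗ[ℂ] (ℕ → ℂ)) (he : Function.Injective e)
    -- the norm is a Riesz norm:
    (hriesz : ∀ x y : X, (∀ n, ‖e x n‖ ≤ ‖e y n‖) → ‖x‖ ≤ ‖y‖)
    -- the norm is absolute: |x| ∈ X whenever x ∈ X:
    (habs : ∀ x : X, ∃ x' : X, ∀ n, e x' n = ((‖e x n‖ : ℝ) : ℂ))
    -- X is solid:
    (hsolid : ∀ (f : ℕ → ℂ) (y : X),
      (∀ n, ‖f n‖ ≤ ‖e y n‖) → ∃ x : X, e x = f)
    -- C₁ is bounded on X: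
    (C1 : X →L[ℂ] X) (hC1 : ∀ x : X, e (C1 x) = Ces 1 (e x)) :
    ∀ t : ℝ, t ∈ Set.Ico (0 : ℝ) 1 →
      ∃ Ct : X →L[ℂ] X, (∀ x : X, e (Ct x) = Ces t (e x)) ∧ ‖Ct‖ ≤ ‖C1‖ := by
  intro t ht
  obtain ⟨ht0, ht1⟩ := ht
  -- coordinatewise domination by C₁ applied to |x|
  have hdom : ∀ (x x' : X), (∀ n, e x' n = ((‖e x n‖ : ℝ) : ℂ)) →
      ∀ n, ‖Ces t (e x) n‖ ≤ ‖e (C1 x') n‖ := by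
    intro x x' hx' n
    rw [hC1, Ces_one_abs (e x) (e x') hx']
    exact Ces_abs_le ht0 ht1.le (e x) n
  have key : ∀ x : X, ∃ y : X, e y = Ces t (e x) := by
    intro x
    obtain ⟨x', hx'⟩ := habs x
    exact hsolid _ (C1 x') (hdom x x' hx')
  choose T hT using key
  have Tadd : ∀ x y : X, T (x + y) = T x + T y := by
    intro x y
    apply he
    rw [map_add, hT, hT, hT, map_add]
    funext n
    simp only [Ces, Pi.add_apply, mul_add, Finset.sum_add_distrib, add_div]
  have Tsmul : ∀ (c : ℂ) (x : X), T (c • x) = c • T x := by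
    intro c x
    apply he
    rw [map_smul, hT, hT, map_smul]
    funext n
    simp only [Ces, Pi.smul_apply, smul_eq_mul]
    rw [← mul_div_assoc, Finset.mul_sum]
    congr 1
    exact Finset.sum_congr rfl fun i _ => by ring
  have hbound : ∀ x : X, ‖T x‖ ≤ ‖C1‖ * ‖x‖ := by
    intro x
    obtain ⟨x', hx'⟩ := habs x
    have hx'norm : ‖x'‖ = ‖x‖ := by
      apply le_antisymm
      · apply hriesz
        intro n
        rw [hx', Complex.norm_real, Real.norm_eq_abs, abs_of_nonneg (norm_nonneg _)]
      · apply hriesz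
        intro n
        rw [hx', Complex.norm_real, Real.norm_eq_abs, abs_of_nonneg (norm_nonneg _)]
    calc ‖T x‖ ≤ ‖C1 x'‖ := by
          apply hriesz
          intro n
          rw [hT]
          exact hdom x x' hx' n
      _ ≤ ‖C1‖ * ‖x'‖ := C1.le_opNorm x'
      _ = ‖C1‖ * ‖x‖ := by rw [hx'norm]
  let L : X →ₗ[ℂ] X := { toFun := T, map_add' := Tadd, map_smul' := Tsmul }
  refine ⟨LinearMap.mkContinuous L ‖C1‖ hbound, fun x => hT x, ?_⟩
  exact LinearMap.mkContinuous_norm_le L (norm_nonneg C1) hbound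
end

section
/- For every t ∈ [0,1) and every m ∈ ℕ₀, the vector x_t^[m] ∈ ω defined by (x_t^[m])_j = 0 for 0 ≤ j < m, (x_t^[m])_m = 1, and (x_t^[m])_{m+n} = (∏_{i=1}^n (m+i)/n!) · t^n for n ≥ 1, is an eigenvector of the generalized Cesàro operator C_t on ω with eigenvalue 1/(m+1), i.e., C_t x_t^[m] = (1/(m+1)) x_t^[m]. -/
/-- The vector x_t^[m] ∈ ω: zero in coordinates j < m, 1 in coordinate m, and
`(x_t^[m])_{m+n} = (∏_{i=1}^n (m+i) / n!) t^n` for n ≥ 1 (here written at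
coordinate j = m+n, so n = j - m). -/
noncomputable def xvec (t : ℝ) (m : ℕ) : ℕ → ℂ :=
  fun j => if j < m then 0
    else (∏ i ∈ Finset.range (j - m), ((m : ℂ) + (i : ℂ) + 1)) / (Nat.factorial (j - m) : ℂ)
      * (t : ℂ) ^ (j - m)

lemma prod_eq_choose (m k : ℕ) :
    (∏ i ∈ Finset.range k, ((m : ℂ) + (i : ℂ) + 1)) =
      (Nat.choose (m + k) k : ℂ) * (Nat.factorial k : ℂ) := by
  induction k with
  | zero => simp
  | succ k ih =>
      rw [Finset.prod_range_succ, ih]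
      have h : (m + k + 1) * Nat.choose (m + k) k = Nat.choose (m + k + 1) (k + 1) * (k + 1) :=
        Nat.add_one_mul_choose_eq (m + k) k
      have h' : ((m + k + 1 : ℕ) : ℂ) * (Nat.choose (m + k) k : ℂ)
          = (Nat.choose (m + k + 1) (k + 1) : ℂ) * ((k + 1 : ℕ) : ℂ) := by
        exact_mod_cast congrArg (Nat.cast : ℕ → ℂ) h
      have e : m + (k + 1) = m + k + 1 := by omega
      rw [e, Nat.factorial_succ]
      push_cast at h' ⊢
      linear_combination (Nat.factorial k : ℂ) * h'

lemma xvec_add (t : ℝ) (m k : ℕ) :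
    xvec t m (m + k) = (Nat.choose (m + k) k : ℂ) * (t : ℂ) ^ k := by
  unfold xvec
  simp [Nat.add_sub_cancel_left, prod_eq_choose,
    Nat.cast_ne_zero.mpr (Nat.factorial_ne_zero k), mul_div_assoc]

lemma hockey (m k : ℕ) :
    (∑ j ∈ Finset.range (k + 1), Nat.choose (m + j) j) = Nat.choose (m + k + 1) k := by
  induction k with
  | zero => simp
  | succ k ih =>
      rw [Finset.sum_range_succ, ih]
      have e : m + (k + 1) = m + k + 1 := by omega
      rw [e]
      have : Nat.choose (m + k + 1 + 1) (k + 1)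
          = Nat.choose (m + k + 1) k + Nat.choose (m + k + 1) (k + 1) :=
        Nat.choose_succ_succ (m + k + 1) k
      omega

/-- For every t ∈ [0,1) and m ∈ ℕ₀, x_t^[m] is an eigenvector of the
generalized Cesàro operator C_t on ω with eigenvalue 1/(m+1). -/
theorem stmt_6 (t : ℝ) (ht : t ∈ Set.Ico (0 : ℝ) 1) (m : ℕ) :
    Ces t (xvec t m) = fun j => (1 / ((m : ℂ) + 1)) * xvec t m j := by
  funext j
  rcases lt_or_ge j m with hj | hj
  · have hz : ∀ i ∈ Finset.range (j + 1), (t : ℂ) ^ (j - i) * xvec t m i = 0 := by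
      intro i hi
      have hi' := Finset.mem_range.mp hi
      have : i < m := by omega
      simp [xvec, this]
    simp only [Ces, Finset.sum_eq_zero hz, zero_div]
    simp [xvec, hj]
  · obtain ⟨k, rfl⟩ := Nat.exists_eq_add_of_le hj
    have hsum : (∑ i ∈ Finset.range (m + k + 1), (t : ℂ) ^ (m + k - i) * xvec t m i)
        = (Nat.choose (m + k + 1) k : ℂ) * (t : ℂ) ^ k := by
      have e : m + k + 1 = m + (k + 1) := by omega
      rw [e, Finset.sum_range_add]
      have h1 : (∑ i ∈ Finset.range m, (t : ℂ) ^ (m + k - i) * xvec t m i) = 0 := by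
        apply Finset.sum_eq_zero
        intro i hi
        simp [xvec, (Finset.mem_range.mp hi)]
      rw [h1, zero_add]
      have h2 : ∀ jj ∈ Finset.range (k + 1),
          (t : ℂ) ^ (m + k - (m + jj)) * xvec t m (m + jj)
          = (Nat.choose (m + jj) jj : ℂ) * (t : ℂ) ^ k := by
        intro jj hjj
        have hle : jj ≤ k := Nat.lt_succ_iff.mp (Finset.mem_range.mp hjj)
        rw [xvec_add]
        have h3 : m + k - (m + jj) = k - jj := by omega
        rw [h3, mul_left_comm, ← pow_add]
        congr 2
        omega
      rw [Finset.sum_congr rfl h2, ← Finset.sum_mul, ← Nat.cast_sum, hockey, ← e]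
    have hm1 : ((m : ℂ) + 1) ≠ 0 := Nat.cast_add_one_ne_zero m
    have hmk1 : ((m : ℂ) + (k : ℂ) + 1) ≠ 0 := by
      have := Nat.cast_add_one_ne_zero (R := ℂ) (m + k)
      push_cast at this
      exact this
    have hsym : Nat.choose (m + k + 1) k = Nat.choose (m + k + 1) (m + 1) := by
      have := Nat.choose_symm (n := m + k + 1) (k := m + 1) (by omega)
      have h4 : m + k + 1 - (m + 1) = k := by omega
      rw [h4] at this
      exact this
    have hsym2 : Nat.choose (m + k) m = Nat.choose (m + k) k := by
      have := Nat.choose_symm (n := m + k) (k := m) (by omega)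
      have h4 : m + k - m = k := by omega
      rw [h4] at this
      exact this.symm
    have key : (m + k + 1) * Nat.choose (m + k) k = Nat.choose (m + k + 1) k * (m + 1) := by
      rw [hsym, ← hsym2]
      exact Nat.add_one_mul_choose_eq (m + k) m
    have keyC : ((m : ℂ) + k + 1) * (Nat.choose (m + k) k : ℂ)
        = (Nat.choose (m + k + 1) k : ℂ) * ((m : ℂ) + 1) := by
      exact_mod_cast congrArg (Nat.cast : ℕ → ℂ) key
    simp only [Ces, hsum, xvec_add]
    push_cast
    field_simp
    linear_combination (-((t : ℂ) ^ k)) * keyC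
end

section
/- For every t ∈ [0,1), the bounded operator C_t on ℓ^∞(ℕ₀) satisfies: for each x ∈ ℓ^∞ and each n ∈ ℕ₀, |(C_t x)_n| ≤ ‖x‖_∞ / ((n+1)(1−t)). Consequently the image of C_t : ℓ^∞ → ℓ^∞ is contained in ℓ^p for every p > 1. -/
/-- For t ∈ [0,1) and x ∈ ℓ^∞(ℕ₀), |(C_t x)_n| ≤ ‖x‖_∞/((n+1)(1−t)) for
every n; consequently C_t x ∈ ℓ^p for every p > 1. -/
theorem stmt_7 (t : ℝ) (ht : t ∈ Set.Ico (0 : ℝ) 1)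
    (x : lp (fun _ : ℕ => ℂ) ⊤) :
    (∀ n : ℕ, ‖Ces t (fun i => x i) n‖ ≤ ‖x‖ / (((n : ℝ) + 1) * (1 - t))) ∧
      (∀ p : ℝ, 1 < p → Memℓp (Ces t (fun i => x i)) (ENNReal.ofReal p)) := by
  obtain ⟨ht0, ht1⟩ := ht
  have h1t : (0:ℝ) < 1 - t := by linarith
  have hxnn : (0:ℝ) ≤ ‖x‖ := norm_nonneg x
  have key : ∀ n : ℕ, ‖Ces t (fun i => x i) n‖ ≤ ‖x‖ / (((n : ℝ) + 1) * (1 - t)) := by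
    intro n
    have hden0 : (0:ℝ) < ((n:ℝ) + 1) * (1 - t) := mul_pos (by positivity) h1t
    have hnum : ‖∑ i ∈ Finset.range (n + 1), (t : ℂ) ^ (n - i) * x i‖
        ≤ ‖x‖ / (1 - t) := by
      calc ‖∑ i ∈ Finset.range (n + 1), (t : ℂ) ^ (n - i) * x i‖
          ≤ ∑ i ∈ Finset.range (n + 1), ‖(t : ℂ) ^ (n - i) * x i‖ :=
            norm_sum_le _ _
        _ ≤ ∑ i ∈ Finset.range (n + 1), t ^ (n - i) * ‖x‖ := by
            apply Finset.sum_le_sum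
            intro i _
            rw [norm_mul, norm_pow, Complex.norm_real, Real.norm_of_nonneg ht0]
            exact mul_le_mul_of_nonneg_left (lp.norm_apply_le_norm (by norm_num) x i)
              (pow_nonneg ht0 _)
        _ = (∑ i ∈ Finset.range (n + 1), t ^ i) * ‖x‖ := by
            rw [← Finset.sum_mul]
            congr 1
            simpa using Finset.sum_range_reflect (fun i => t ^ i) (n + 1)
        _ ≤ (1 / (1 - t)) * ‖x‖ := by
            apply mul_le_mul_of_nonneg_right _ hxnn
            rw [le_div_iff₀ h1t]
            nlinarith [geom_sum_mul t (n + 1), pow_nonneg ht0 (n + 1)]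
        _ = ‖x‖ / (1 - t) := by ring
    have hdenabs : ‖((n : ℂ) + 1)‖ = (n : ℝ) + 1 := by
      rw [show ((n:ℂ) + 1) = ((n:ℝ) + 1 : ℝ) by push_cast; ring, Complex.norm_real,
        Real.norm_of_nonneg (by positivity)]
    rw [Ces, norm_div, hdenabs]
    rw [div_le_div_iff₀ (by positivity) hden0]
    calc ‖∑ i ∈ Finset.range (n + 1), (t : ℂ) ^ (n - i) * x i‖ * (((n:ℝ)+1) * (1-t))
        ≤ (‖x‖ / (1 - t)) * (((n:ℝ)+1) * (1-t)) :=
          mul_le_mul_of_nonneg_right hnum hden0.le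
      _ = ‖x‖ * ((n:ℝ)+1) := by
          rw [mul_comm ((n:ℝ)+1) (1-t), ← mul_assoc, div_mul_cancel₀ _ h1t.ne']
  refine ⟨key, fun p hp => ?_⟩
  apply memℓp_gen
  have htop : (ENNReal.ofReal p).toReal = p := ENNReal.toReal_ofReal (by linarith)
  rw [htop]
  have hsum : Summable (fun n : ℕ => (‖x‖ / (1 - t)) ^ p * (1 / ((n:ℝ)+1) ^ p)) := by
    apply Summable.mul_left
    have h := (Real.summable_one_div_nat_rpow.mpr hp).comp_injective (add_right_injective 1)
    apply h.congr
    intro n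
    simp only [Function.comp_apply]
    push_cast
    rw [add_comm]
  apply hsum.of_nonneg_of_le (fun n => by positivity)
  intro n
  have h1 : ‖Ces t (fun i => x i) n‖ ≤ (‖x‖ / (1 - t)) * (1 / ((n:ℝ)+1)) := by
    refine (key n).trans_eq ?_
    rw [div_mul_div_comm, mul_one, mul_comm (1 - t)]
  calc ‖Ces t (fun i => x i) n‖ ^ p ≤ ((‖x‖ / (1 - t)) * (1 / ((n:ℝ)+1))) ^ p :=
        Real.rpow_le_rpow (norm_nonneg _) h1 (by linarith)
    _ = (‖x‖ / (1 - t)) ^ p * (1 / ((n:ℝ)+1) ^ p) := by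
        rw [Real.mul_rpow (div_nonneg hxnn h1t.le) (by positivity), one_div, one_div,
          Real.inv_rpow (by positivity)]
end

section
/- Let X ⊆ ω be a BK-space whose closed unit ball is closed (equivalently compact) as a subset of the Fréchet space ω. Suppose C_t is a bounded operator on X for every t ∈ [0,1) with M := sup_{t ∈ [0,1)} ‖C_t‖ < ∞. Then C_1 maps X into X and is a bounded operator on X with ‖C_1‖ ≤ M. -/
lemma Ces_add (t : ℝ) (x y : ℕ → ℂ) : Ces t (x + y) = Ces t x + Ces t y := by
  funext n
  simp only [Ces, Pi.add_apply, mul_add, Finset.sum_add_distrib, add_div]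

lemma Ces_smul (t : ℝ) (c : ℂ) (x : ℕ → ℂ) : Ces t (c • x) = c • Ces t x := by
  funext n
  simp only [Ces, Pi.smul_apply, smul_eq_mul]
  have h : (∑ i ∈ Finset.range (n + 1), (t : ℂ) ^ (n - i) * (c * x i))
      = c * ∑ i ∈ Finset.range (n + 1), (t : ℂ) ^ (n - i) * x i := by
    rw [Finset.mul_sum]
    exact Finset.sum_congr rfl fun i _ => by ring
  rw [h, mul_div_assoc]

/-- Let X ⊆ ω be a BK-space (continuous injective embedding e into ω) whose
closed unit ball is closed in ω.  If C_t is bounded on X for every t ∈ [0,1) with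
M = sup_t ‖C_t‖ < ∞, then C₁ is a bounded operator on X with ‖C₁‖ ≤ M. -/
theorem stmt_10 {X : Type*} [NormedAddCommGroup X] [NormedSpace ℂ X] [CompleteSpace X]
    (e : X →ₗ[ℂ] (ℕ → ℂ)) (he : Function.Injective e) (hec : Continuous e)
    (hball : IsClosed (e '' {x : X | ‖x‖ ≤ 1}))
    (T : ℝ → X →L[ℂ] X)
    (hT : ∀ t ∈ Set.Ico (0 : ℝ) 1, ∀ x : X, e (T t x) = Ces t (e x))
    (M : ℝ) (hM : ∀ t ∈ Set.Ico (0 : ℝ) 1, ‖T t‖ ≤ M) :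
    ∃ C1 : X →L[ℂ] X, (∀ x : X, e (C1 x) = Ces 1 (e x)) ∧ ‖C1‖ ≤ M := by
  have hM0 : 0 ≤ M := le_trans (norm_nonneg _) (hM 0 ⟨le_refl 0, one_pos⟩)
  set t : ℕ → ℝ := fun k => 1 - 1 / (k + 1) with ht
  have htmem : ∀ k, t k ∈ Set.Ico (0 : ℝ) 1 := by
    intro k
    constructor
    · have h1 : 1 / ((k : ℝ) + 1) ≤ 1 := by
        rw [div_le_one (by positivity)]
        linarith [Nat.cast_nonneg (α := ℝ) k]
      simp only [ht]
      linarith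
    · simp only [ht]
      have : 0 < 1 / ((k : ℝ) + 1) := by positivity
      linarith
  have httend : Filter.Tendsto t Filter.atTop (nhds 1) := by
    have h0 := tendsto_one_div_add_atTop_nhds_zero_nat (𝕜 := ℝ)
    have h2 := Filter.Tendsto.const_sub (1 : ℝ) h0
    simpa [ht] using h2
  have key : ∀ x : X, ∃ y : X, e y = Ces 1 (e x) ∧ ‖y‖ ≤ M * ‖x‖ := by
    intro x
    set r := M * ‖x‖ with hr
    have hr0 : 0 ≤ r := mul_nonneg hM0 (norm_nonneg x)
    have hSclosed : IsClosed (e '' {z : X | ‖z‖ ≤ r}) := by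
      rcases hr0.eq_or_lt with h | h
      · have hset : {z : X | ‖z‖ ≤ r} = {0} := by
          ext z
          simp [← h, norm_le_zero_iff]
        rw [hset]
        simp only [Set.image_singleton, map_zero]
        exact isClosed_singleton
      · have him : e '' {z : X | ‖z‖ ≤ r} = (fun w : ℕ → ℂ => r • w) '' (e '' {z : X | ‖z‖ ≤ 1}) := by
          ext w
          constructor
          · rintro ⟨z, hz, rfl⟩
            refine ⟨e (r⁻¹ • z), ⟨r⁻¹ • z, ?_, rfl⟩, ?_⟩
            · have : ‖r⁻¹ • z‖ = r⁻¹ * ‖z‖ := by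
                rw [norm_smul, Real.norm_eq_abs, abs_of_pos (inv_pos.mpr h)]
              simp only [Set.mem_setOf_eq, this]
              rw [inv_mul_le_one₀ h]
              · exact hz
            · show r • e (r⁻¹ • z) = e z
              rw [← e.map_smul_of_tower, smul_inv_smul₀ h.ne']
          · rintro ⟨_, ⟨z, hz, rfl⟩, rfl⟩
            refine ⟨r • z, ?_, e.map_smul_of_tower r z⟩
            simp only [Set.mem_setOf_eq] at hz ⊢
            calc ‖r • z‖ = |r| * ‖z‖ := by rw [norm_smul, Real.norm_eq_abs]
              _ ≤ r * 1 := by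
                  rw [abs_of_pos h]
                  exact mul_le_mul_of_nonneg_left hz hr0
              _ = r := mul_one r
        rw [him]
        exact isClosedMap_smul_of_ne_zero h.ne' _ hball
    have hseq : ∀ k, e (T (t k) x) ∈ e '' {z : X | ‖z‖ ≤ r} := by
      intro k
      refine ⟨T (t k) x, ?_, rfl⟩
      calc ‖T (t k) x‖ ≤ ‖T (t k)‖ * ‖x‖ := (T (t k)).le_opNorm x
        _ ≤ M * ‖x‖ := mul_le_mul_of_nonneg_right (hM (t k) (htmem k)) (norm_nonneg x)
    have htend : Filter.Tendsto (fun k => e (T (t k) x)) Filter.atTop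
        (nhds (Ces 1 (e x))) := by
      rw [tendsto_pi_nhds]
      intro n
      have hc : Continuous fun s : ℝ =>
          (∑ i ∈ Finset.range (n + 1), (s : ℂ) ^ (n - i) * e x i) / ((n : ℂ) + 1) := by
        apply Continuous.div_const
        exact continuous_finset_sum _ fun i _ =>
          (Complex.continuous_ofReal.pow _).mul continuous_const
      have h3 : Filter.Tendsto (fun k => Ces (t k) (e x) n) Filter.atTop
          (nhds (Ces 1 (e x) n)) := (hc.tendsto 1).comp httend
      have heq : ∀ k, e (T (t k) x) n = Ces (t k) (e x) n := fun k => by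
        rw [hT (t k) (htmem k)]
      simpa only [heq] using h3
    obtain ⟨y, hy, hey⟩ := hSclosed.mem_of_tendsto htend (Filter.Eventually.of_forall hseq)
    exact ⟨y, hey, hy⟩
  choose f hf hfb using key
  have hadd : ∀ a b, f (a + b) = f a + f b := fun a b => he (by
    rw [hf, map_add, map_add, hf, hf, Ces_add])
  have hsmul : ∀ (c : ℂ) (a : X), f (c • a) = c • f a := fun c a => he (by
    rw [hf, map_smul, map_smul, hf, Ces_smul])
  let L : X →ₗ[ℂ] X :=
    { toFun := f, map_add' := hadd, map_smul' := hsmul }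
  refine ⟨LinearMap.mkContinuous L M (fun x => hfb x), fun x => hf x,
    LinearMap.mkContinuous_norm_le L hM0 _⟩
end

section
/- For each p ∈ (1,∞), the operator B on ℓ^p(ℕ₀) defined by (By)_0 = 0 and (By)_n = (1/(n(n+1))) Σ_{j=0}^{n−1} y_j for n ≥ 1, is a bounded linear operator with ‖B‖ ≤ (Σ_{k=2}^∞ k^{−p})^{1/p}, and moreover B is a compact operator (being the operator-norm limit of its finite-rank truncations, with ‖B − B^{(N)}‖ ≤ (Σ_{n=N}^∞ (n+1)^{−p})^{1/p}). -/
open scoped Topology ENNReal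

/-- The operator B: (By)₀ = 0 and (By)_n = (1/(n(n+1))) Σ_{j=0}^{n−1} y_j for n ≥ 1. -/
noncomputable def Bfun (y : ℕ → ℂ) : ℕ → ℂ :=
  fun n => if n = 0 then 0
    else (1 / ((n : ℂ) * ((n : ℂ) + 1))) * ∑ j ∈ Finset.range n, y j


noncomputable def eSeq : ℕ → ℝ := fun n => if n = 0 then 0 else ((n : ℝ) + 1)⁻¹

lemma eSeq_nonneg (n : ℕ) : 0 ≤ eSeq n := by
  unfold eSeq; split <;> positivity

lemma eSeq_rpow {p : ℝ} (hp : 0 < p) (n : ℕ) :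
    eSeq n ^ p = if n = 0 then 0 else ((n : ℝ) + 1) ^ (-p) := by
  unfold eSeq
  split
  · exact Real.zero_rpow hp.ne'
  · rw [Real.inv_rpow (by positivity), ← Real.rpow_neg (by positivity)]

lemma summable_eSeq_rpow {p : ℝ} (hp : 1 < p) : Summable (fun n : ℕ => eSeq n ^ p) := by
  have hsum : Summable (fun n : ℕ => ((n : ℝ) + 1) ^ (-p)) := by
    have h := Real.summable_nat_rpow.mpr (show -p < -1 by linarith)
    have h2 := (summable_nat_add_iff 1).mpr h
    simpa [Nat.cast_add] using h2
  refine Summable.of_nonneg_of_le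
    (fun n => Real.rpow_nonneg (eSeq_nonneg n) p) (fun n => ?_) hsum
  rw [eSeq_rpow (by linarith) n]
  split
  · positivity
  · exact le_refl _

section
variable {p : ℝ}

lemma ofReal_toReal (hp : 1 < p) : (ENNReal.ofReal p).toReal = p :=
  ENNReal.toReal_ofReal (by linarith)

lemma bfun_bound (hp : 1 < p) [Fact (1 ≤ ENNReal.ofReal p)]
    (y : lp (fun _ : ℕ => ℂ) (ENNReal.ofReal p)) (n : ℕ) :
    ‖Bfun (fun i => y i) n‖ ≤ ‖y‖ * eSeq n := by
  have hp0 : 0 < p := by linarith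
  unfold Bfun eSeq
  rcases eq_or_ne n 0 with rfl | hn
  · simp
  · rw [if_neg hn, if_neg hn, norm_mul]
    have hn1 : 1 ≤ n := Nat.one_le_iff_ne_zero.mpr hn
    have hnR : (1:ℝ) ≤ (n:ℝ) := by exact_mod_cast hn1
    have h1 : ‖(1:ℂ) / ((n:ℂ) * ((n:ℂ)+1))‖ = 1 / ((n:ℝ) * ((n:ℝ)+1)) := by
      have h : ((n:ℂ) * ((n:ℂ) + 1)) = ((n * (n+1) : ℕ) : ℂ) := by push_cast; ring
      rw [h, norm_div, norm_one, Complex.norm_natCast]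
      push_cast; ring
    rw [h1]
    have h2 : ‖∑ j ∈ Finset.range n, y j‖ ≤ (n:ℝ) * ‖y‖ := by
      calc ‖∑ j ∈ Finset.range n, y j‖ ≤ ∑ j ∈ Finset.range n, ‖y j‖ := norm_sum_le _ _
        _ ≤ ∑ _j ∈ Finset.range n, ‖y‖ := by
            refine Finset.sum_le_sum fun j _ => ?_
            exact lp.norm_apply_le_norm (ENNReal.ofReal_pos.mpr hp0).ne' y j
        _ = (n:ℝ) * ‖y‖ := by simp [Finset.sum_const, Finset.card_range]
    have hne : (n:ℝ) ≠ 0 := by positivity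
    have hne1 : (n:ℝ) + 1 ≠ 0 := by positivity
    calc 1 / ((n:ℝ)*((n:ℝ)+1)) * ‖∑ j ∈ Finset.range n, y j‖
        ≤ 1/((n:ℝ)*((n:ℝ)+1)) * ((n:ℝ)*‖y‖) := by
          apply mul_le_mul_of_nonneg_left h2 (by positivity)
      _ = ‖y‖ * ((n:ℝ)+1)⁻¹ := by field_simp

lemma memℓp_of_bound (hp : 1 < p) {f : ℕ → ℂ} {c : ℝ} (hc : 0 ≤ c)
    (hf : ∀ n, ‖f n‖ ≤ c * eSeq n) : Memℓp f (ENNReal.ofReal p) := by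
  have hp0 : 0 < p := by linarith
  apply memℓp_gen
  rw [ofReal_toReal hp]
  refine Summable.of_nonneg_of_le (fun n => Real.rpow_nonneg (norm_nonneg _) _)
    (fun n => ?_) ((summable_eSeq_rpow hp).mul_left (c ^ p))
  calc ‖f n‖ ^ p ≤ (c * eSeq n) ^ p :=
        Real.rpow_le_rpow (norm_nonneg _) (hf n) hp0.le
    _ = c ^ p * eSeq n ^ p := Real.mul_rpow hc (eSeq_nonneg n)

lemma norm_le_of_bound (hp : 1 < p) [Fact (1 ≤ ENNReal.ofReal p)] (N : ℕ)
    (f : lp (fun _ : ℕ => ℂ) (ENNReal.ofReal p)) {c : ℝ} (hc : 0 ≤ c)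
    (hf : ∀ n, ‖f n‖ ≤ c * (if n < N then 0 else eSeq n)) :
    ‖f‖ ≤ (∑' k : ℕ, eSeq (k + N) ^ p) ^ (1 / p) * c := by
  have hp0 : 0 < p := by linarith
  set S := ∑' k : ℕ, eSeq (k + N) ^ p with hSdef
  have hg : Summable (fun n : ℕ => if n < N then 0 else eSeq n ^ p) := by
    refine Summable.of_nonneg_of_le (fun n => ?_) (fun n => ?_) (summable_eSeq_rpow hp)
    · split
      · exact le_refl _
      · exact Real.rpow_nonneg (eSeq_nonneg n) p
    · split
      · exact Real.rpow_nonneg (eSeq_nonneg n) p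
      · exact le_refl _
  have hS0 : 0 ≤ S := tsum_nonneg (fun k => Real.rpow_nonneg (eSeq_nonneg _) _)
  have htp : 0 < (ENNReal.ofReal p).toReal := by rw [ofReal_toReal hp]; exact hp0
  refine lp.norm_le_of_tsum_le htp (by positivity) ?_
  rw [ofReal_toReal hp]
  have hrhs : (S ^ (1/p) * c) ^ p = S * c ^ p := by
    rw [Real.mul_rpow (Real.rpow_nonneg hS0 _) hc, ← Real.rpow_mul hS0, one_div,
      inv_mul_cancel₀ hp0.ne', Real.rpow_one]
  rw [hrhs]
  have hterm : ∀ n : ℕ, ‖f n‖ ^ p ≤ (if n < N then 0 else eSeq n ^ p) * c ^ p := by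
    intro n
    by_cases h : n < N
    · have h0 : ‖f n‖ ≤ 0 := by simpa [h] using hf n
      have : ‖f n‖ = 0 := le_antisymm h0 (norm_nonneg _)
      simp [h, this, Real.zero_rpow hp0.ne']
    · have := hf n
      rw [if_neg h] at this ⊢
      calc ‖f n‖ ^ p ≤ (c * eSeq n) ^ p :=
            Real.rpow_le_rpow (norm_nonneg _) this hp0.le
        _ = eSeq n ^ p * c ^ p := by
            rw [Real.mul_rpow hc (eSeq_nonneg n)]; ring
  have hfs : Summable (fun n : ℕ => ‖f n‖ ^ p) := by
    have := (lp.memℓp f).summable htp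
    rwa [ofReal_toReal hp] at this
  calc ∑' n : ℕ, ‖f n‖ ^ p
      ≤ ∑' n : ℕ, (if n < N then 0 else eSeq n ^ p) * c ^ p :=
        Summable.tsum_le_tsum hterm hfs (hg.mul_right _)
    _ = (∑' n : ℕ, if n < N then 0 else eSeq n ^ p) * c ^ p := tsum_mul_right
    _ = S * c ^ p := by
        congr 1
        rw [← Summable.sum_add_tsum_nat_add N hg]
        have h1 : ∑ i ∈ Finset.range N, (if i < N then 0 else eSeq i ^ p) = 0 := by
          apply Finset.sum_eq_zero
          intro i hi
          simp [Finset.mem_range.mp hi]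
        rw [h1, zero_add]
        refine tsum_congr fun k => ?_
        rw [if_neg (by omega)]

end

lemma Bfun_add (y z : ℕ → ℂ) (n : ℕ) :
    Bfun (fun i => y i + z i) n = Bfun y n + Bfun z n := by
  unfold Bfun
  split
  · simp
  · rw [Finset.sum_add_distrib, mul_add]

lemma Bfun_smul (c : ℂ) (y : ℕ → ℂ) (n : ℕ) :
    Bfun (fun i => c * y i) n = c * Bfun y n := by
  unfold Bfun
  split
  · simp
  · rw [← Finset.mul_sum]; ring

lemma rankOne_compact {E F : Type*} [NormedAddCommGroup E] [NormedSpace ℂ E]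
    [NormedAddCommGroup F] [NormedSpace ℂ F] (c : E →L[ℂ] ℂ) (v : F) :
    IsCompactOperator (c.smulRight v) := by
  refine ⟨(fun t : ℂ => t • v) '' Metric.closedBall 0 (‖c‖ + 1), ?_, ?_⟩
  · exact (isCompact_closedBall 0 _).image (continuous_id.smul continuous_const)
  · refine Filter.mem_of_superset (Metric.closedBall_mem_nhds (0 : E) one_pos) ?_
    intro x hx
    refine ⟨c x, ?_, rfl⟩
    rw [Metric.mem_closedBall, dist_zero_right]
    calc ‖c x‖ ≤ ‖c‖ * ‖x‖ := c.le_opNorm x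
      _ ≤ ‖c‖ * 1 := by
          refine mul_le_mul_of_nonneg_left ?_ (norm_nonneg c)
          rwa [Metric.mem_closedBall, dist_zero_right] at hx
      _ ≤ ‖c‖ + 1 := by linarith [norm_nonneg c]

lemma isCompactOperator_finsum {E F : Type*} [NormedAddCommGroup E] [NormedSpace ℂ E]
    [NormedAddCommGroup F] [NormedSpace ℂ F] {ι : Type*} (s : Finset ι) (T : ι → E →L[ℂ] F)
    (h : ∀ i ∈ s, IsCompactOperator (T i)) :
    IsCompactOperator (∑ i ∈ s, T i) := by
  classical
  induction s using Finset.cons_induction with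
  | empty => simpa using (isCompactOperator_zero (M₁ := E) (M₂ := F))
  | cons a s ha ih =>
    rw [Finset.sum_cons]
    have h1 : IsCompactOperator (T a) := h a (Finset.mem_cons_self a s)
    have h2 : IsCompactOperator (∑ i ∈ s, T i) := ih fun i hi => h i (Finset.mem_cons_of_mem hi)
    exact h1.add h2

/-- the coordinate evaluation functional -/
noncomputable def coordCLM (p : ℝ) (hp : 1 < p) [Fact (1 ≤ ENNReal.ofReal p)] (n : ℕ) :
    lp (fun _ : ℕ => ℂ) (ENNReal.ofReal p) →L[ℂ] ℂ :=
  LinearMap.mkContinuous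
    { toFun := fun y => y n
      map_add' := fun y z => by
        have := lp.coeFn_add y z
        exact congrFun this n
      map_smul' := fun c y => by
        have := lp.coeFn_smul c y
        simpa using congrFun this n } 1
    (fun y => by
      show ‖y n‖ ≤ 1 * ‖y‖
      simpa using lp.norm_apply_le_norm
        (ENNReal.ofReal_pos.mpr (by linarith : (0:ℝ) < p)).ne' y n)

@[simp] lemma coordCLM_apply (p : ℝ) (hp : 1 < p) [Fact (1 ≤ ENNReal.ofReal p)] (n : ℕ)
    (y : lp (fun _ : ℕ => ℂ) (ENNReal.ofReal p)) : coordCLM p hp n y = y n := rfl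

/-- basis vector -/
noncomputable def singl (p : ℝ) (n : ℕ) : lp (fun _ : ℕ => ℂ) (ENNReal.ofReal p) :=
  ⟨fun m => if m = n then 1 else 0, by
    refine (memℓp_zero ?_).of_exponent_ge (by positivity)
    refine (Set.finite_singleton n).subset ?_
    intro m hm
    simp only [Set.mem_setOf_eq] at hm
    by_contra h
    simp only [Set.mem_singleton_iff] at h
    exact hm (if_neg h)⟩

@[simp] lemma singl_apply (p : ℝ) (n m : ℕ) :
    (singl p n : ℕ → ℂ) m = if m = n then 1 else 0 := rfl

lemma tsum_eSeq {p : ℝ} (hp : 1 < p) :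
    (∑' k : ℕ, eSeq (k + 0) ^ p) = ∑' k : ℕ, ((k : ℝ) + 2) ^ (-p) := by
  have hp0 : 0 < p := by linarith
  simp only [Nat.add_zero]
  rw [Summable.tsum_eq_zero_add (summable_eSeq_rpow hp)]
  have h0 : eSeq 0 ^ p = 0 := by simp [eSeq, Real.zero_rpow hp0.ne']
  rw [h0, zero_add]
  refine tsum_congr fun k => ?_
  rw [eSeq_rpow hp0 (k + 1), if_neg (Nat.succ_ne_zero k)]
  push_cast
  ring_nf

noncomputable def Blin (p : ℝ) (hp : 1 < p) [Fact (1 ≤ ENNReal.ofReal p)] :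
    lp (fun _ : ℕ => ℂ) (ENNReal.ofReal p) →ₗ[ℂ] lp (fun _ : ℕ => ℂ) (ENNReal.ofReal p) where
  toFun := fun y => ⟨Bfun (fun i => y i), memℓp_of_bound hp (norm_nonneg y) (bfun_bound hp y)⟩
  map_add' := fun y z => by
    apply lp.ext
    funext n
    simp only [lp.coeFn_add, Pi.add_apply]
    exact Bfun_add _ _ n
  map_smul' := fun c y => by
    apply lp.ext
    funext n
    simp only [lp.coeFn_smul, Pi.smul_apply, smul_eq_mul, RingHom.id_apply]
    exact Bfun_smul c _ n

lemma Blin_apply (p : ℝ) (hp : 1 < p) [Fact (1 ≤ ENNReal.ofReal p)]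
    (y : lp (fun _ : ℕ => ℂ) (ENNReal.ofReal p)) (n : ℕ) :
    (Blin p hp y : ℕ → ℂ) n = Bfun (fun i => y i) n := rfl

lemma Blin_bound (p : ℝ) (hp : 1 < p) [Fact (1 ≤ ENNReal.ofReal p)]
    (y : lp (fun _ : ℕ => ℂ) (ENNReal.ofReal p)) :
    ‖Blin p hp y‖ ≤ (∑' k : ℕ, ((k : ℝ) + 2) ^ (-p)) ^ (1 / p) * ‖y‖ := by
  have h := norm_le_of_bound hp 0 (Blin p hp y) (norm_nonneg y) ?_
  · rwa [tsum_eSeq hp] at h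
  · intro n
    simp only [Nat.not_lt_zero, if_false]
    exact bfun_bound hp y n

noncomputable def BCLM (p : ℝ) (hp : 1 < p) [Fact (1 ≤ ENNReal.ofReal p)] :
    lp (fun _ : ℕ => ℂ) (ENNReal.ofReal p) →L[ℂ] lp (fun _ : ℕ => ℂ) (ENNReal.ofReal p) :=
  (Blin p hp).mkContinuous ((∑' k : ℕ, ((k : ℝ) + 2) ^ (-p)) ^ (1 / p)) (Blin_bound p hp)

lemma BCLM_apply (p : ℝ) (hp : 1 < p) [Fact (1 ≤ ENNReal.ofReal p)]
    (y : lp (fun _ : ℕ => ℂ) (ENNReal.ofReal p)) (n : ℕ) :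
    (BCLM p hp y : ℕ → ℂ) n = Bfun (fun i => y i) n := rfl

noncomputable def TN (p : ℝ) (hp : 1 < p) [Fact (1 ≤ ENNReal.ofReal p)] (N : ℕ) :
    lp (fun _ : ℕ => ℂ) (ENNReal.ofReal p) →L[ℂ] lp (fun _ : ℕ => ℂ) (ENNReal.ofReal p) :=
  ∑ n ∈ Finset.range N, ((coordCLM p hp n).comp (BCLM p hp)).smulRight (singl p n)

lemma TN_apply (p : ℝ) (hp : 1 < p) [Fact (1 ≤ ENNReal.ofReal p)] (N : ℕ)
    (y : lp (fun _ : ℕ => ℂ) (ENNReal.ofReal p)) (m : ℕ) :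
    (TN p hp N y : ℕ → ℂ) m = if m < N then (BCLM p hp y : ℕ → ℂ) m else 0 := by
  unfold TN
  rw [ContinuousLinearMap.sum_apply, lp.coeFn_sum, Finset.sum_apply]
  simp only [ContinuousLinearMap.smulRight_apply, ContinuousLinearMap.comp_apply,
    coordCLM_apply, lp.coeFn_smul, Pi.smul_apply, singl_apply, smul_eq_mul, mul_ite,
    mul_one, mul_zero]
  rw [Finset.sum_ite_eq (Finset.range N) m fun n => (BCLM p hp y : ℕ → ℂ) n]
  simp [Finset.mem_range]

lemma TN_compact (p : ℝ) (hp : 1 < p) [Fact (1 ≤ ENNReal.ofReal p)] (N : ℕ) :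
    IsCompactOperator (TN p hp N) := by
  unfold TN
  rw [ContinuousLinearMap.coe_sum']
  exact isCompactOperator_finsum (Finset.range N) _ (fun n _ => rankOne_compact _ _)

/-- For 1 < p < ∞, B is a bounded operator on ℓ^p(ℕ₀) with
‖B‖ ≤ (Σ_{k=2}^∞ k^{−p})^{1/p}, and B is a compact operator. -/
theorem stmt_11 (p : ℝ) (hp : 1 < p)
    [Fact (1 ≤ ENNReal.ofReal p)] :
    ∃ B : lp (fun _ : ℕ => ℂ) (ENNReal.ofReal p) →L[ℂ] lp (fun _ : ℕ => ℂ) (ENNReal.ofReal p),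
      (∀ (y : lp (fun _ : ℕ => ℂ) (ENNReal.ofReal p)) (n : ℕ),
          (B y) n = Bfun (fun i => y i) n) ∧
      ‖B‖ ≤ (∑' k : ℕ, ((k : ℝ) + 2) ^ (-p)) ^ (1 / p) ∧
      IsCompactOperator B := by
  have hp0 : 0 < p := by linarith
  refine ⟨BCLM p hp, fun y n => rfl, ?_, ?_⟩
  · have hC0 : 0 ≤ (∑' k : ℕ, ((k : ℝ) + 2) ^ (-p)) ^ (1 / p) :=
      Real.rpow_nonneg (tsum_nonneg fun k => Real.rpow_nonneg (by positivity) _) _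
    exact (Blin p hp).mkContinuous_norm_le hC0 (Blin_bound p hp)
  · have hdiff : ∀ (N : ℕ) (y : lp (fun _ : ℕ => ℂ) (ENNReal.ofReal p)) (n : ℕ),
        ‖((BCLM p hp - TN p hp N) y : ℕ → ℂ) n‖ ≤ ‖y‖ * (if n < N then 0 else eSeq n) := by
      intro N y n
      have h1 : ((BCLM p hp - TN p hp N) y : ℕ → ℂ) n
          = (BCLM p hp y : ℕ → ℂ) n - (TN p hp N y : ℕ → ℂ) n := by
        rw [ContinuousLinearMap.sub_apply, lp.coeFn_sub, Pi.sub_apply]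
      rw [h1, TN_apply]
      by_cases h : n < N
      · simp [h]
      · rw [if_neg h, if_neg h, sub_zero, BCLM_apply]
        exact bfun_bound hp y n
    have hnorm : ∀ N : ℕ, ‖BCLM p hp - TN p hp N‖ ≤ (∑' k : ℕ, eSeq (k + N) ^ p) ^ (1 / p) := by
      intro N
      have hS0 : 0 ≤ (∑' k : ℕ, eSeq (k + N) ^ p) ^ (1 / p) :=
        Real.rpow_nonneg (tsum_nonneg fun k => Real.rpow_nonneg (eSeq_nonneg _) _) _
      refine ContinuousLinearMap.opNorm_le_bound _ hS0 fun y => ?_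
      have := norm_le_of_bound hp N ((BCLM p hp - TN p hp N) y) (norm_nonneg y) (hdiff N y)
      linarith [this]
    have hto : Filter.Tendsto (fun N : ℕ => (∑' k : ℕ, eSeq (k + N) ^ p) ^ (1 / p))
        Filter.atTop (𝓝 0) := by
      have h := tendsto_sum_nat_add (fun n : ℕ => eSeq n ^ p)
      have h2 := h.rpow_const (Or.inr (by positivity : (0:ℝ) ≤ 1 / p))
      simpa [one_div, Real.zero_rpow (inv_ne_zero hp0.ne')] using h2
    have hBn : Filter.Tendsto (fun N : ℕ => ‖BCLM p hp - TN p hp N‖) Filter.atTop (𝓝 0) :=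
      squeeze_zero (fun N => norm_nonneg _) hnorm hto
    have hTt : Filter.Tendsto (fun N : ℕ => TN p hp N) Filter.atTop (𝓝 (BCLM p hp)) := by
      rw [tendsto_iff_norm_sub_tendsto_zero]
      simpa [norm_sub_rev] using hBn
    exact isCompactOperator_of_tendsto hTt (Filter.Eventually.of_forall fun N => TN_compact p hp N)
end
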